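/- arXiv:1406.5261 — 4 statements merged into one kernel-verified Lean document; each statement's English description precedes it below -/
import Mathlib

section
/- Let Q : ⋯ → Q_i →^{d_i} Q_{i-1} → ⋯ → Q₀ →^{d₀} V → 0 be a (not necessarily exact) complex of R-modules with Q_i of type FP_{m-i} for all 0 ≤ i ≤ m, and suppose the homology H_i(Q) is of type FP_{m-i-1} for all 0 ≤ i ≤ m-1. Then V is of type FP_m. (Here d₀ is assumed surjective onto V.) -/
open CategoryTheory

/-- A module `M` over the associative unital ring `R` is of type `FP m` (for `m : ℤ`) if it
admits a projective resolution whose projective modules in degrees `≤ m` are finitely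
generated.  (For `m < 0` the condition is vacuous.) -/
def ModuleCat.IsFP (R : Type) [Ring R] (m : ℤ) (M : ModuleCat R) : Prop :=
  ∃ P : ProjectiveResolution M, ∀ i : ℕ, (i : ℤ) ≤ m → Module.Finite R (P.complex.X i)

/-- The homology of a complex at a given spot: `ker g / im f`, where `f : A → B`, `g : B → C`
and `g ∘ f = 0`. -/
def complexHomology (R : Type) [Ring R] {A B C : Type}
    [AddCommGroup A] [AddCommGroup B] [AddCommGroup C]
    [Module R A] [Module R B] [Module R C]
    (f : A →ₗ[R] B) (g : B →ₗ[R] C) : Type :=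
  LinearMap.ker g ⧸ (LinearMap.range f).comap (LinearMap.ker g).subtype

noncomputable instance (R : Type) [Ring R] {A B C : Type}
    [AddCommGroup A] [AddCommGroup B] [AddCommGroup C]
    [Module R A] [Module R B] [Module R C]
    (f : A →ₗ[R] B) (g : B →ₗ[R] C) : AddCommGroup (complexHomology R f g) :=
  inferInstanceAs (AddCommGroup (LinearMap.ker g ⧸ (LinearMap.range f).comap (LinearMap.ker g).subtype))

noncomputable instance (R : Type) [Ring R] {A B C : Type}
    [AddCommGroup A] [AddCommGroup B] [AddCommGroup C]
    [Module R A] [Module R B] [Module R C]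
    (f : A →ₗ[R] B) (g : B →ₗ[R] C) : Module R (complexHomology R f g) :=
  inferInstanceAs (Module R (LinearMap.ker g ⧸ (LinearMap.range f).comap (LinearMap.ker g).subtype))

open LinearMap


section
variable (R : Type) [Ring R]

def FPt : ℕ → ∀ (M : Type) [AddCommGroup M] [Module R M], Prop
  | 0, M, _, _ => Module.Finite R M
  | (n+1), M, _, _ => ∃ (F : Type) (_ : AddCommGroup F) (_ : Module R F) (f : F →ₗ[R] M),
      Module.Finite R F ∧ Module.Projective R F ∧ Function.Surjective f ∧
        FPt n (LinearMap.ker f)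

variable {R}

theorem fpt_zero {M : Type} [AddCommGroup M] [Module R M] :
    FPt R 0 M ↔ Module.Finite R M := Iff.rfl

theorem fpt_congr {n : ℕ} {M N : Type} [AddCommGroup M] [Module R M]
    [AddCommGroup N] [Module R N] (e : M ≃ₗ[R] N) (h : FPt R n M) : FPt R n N := by
  induction n generalizing M N with
  | zero => rw [fpt_zero] at h ⊢; exact Module.Finite.equiv e
  | succ n ih =>
    obtain ⟨F, _, _, f, h1, h2, h3, h4⟩ := h
    refine ⟨F, _, _, e.toLinearMap ∘ₗ f, h1, h2, e.surjective.comp h3, ?_⟩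
    have hk : LinearMap.ker (e.toLinearMap ∘ₗ f) = LinearMap.ker f := by
      rw [LinearMap.ker_comp, LinearEquiv.ker, Submodule.comap_bot]
    rw [hk]; exact h4

theorem finite_of_ses {A B C : Type} [AddCommGroup A] [Module R A]
    [AddCommGroup B] [Module R B] [AddCommGroup C] [Module R C]
    (f : A →ₗ[R] B) (g : B →ₗ[R] C) (hg : Function.Surjective g)
    (hfg : LinearMap.range f = LinearMap.ker g)
    (hA : Module.Finite R A) (hC : Module.Finite R C) : Module.Finite R B := by
  rw [Module.finite_def] at *
  have h1 : (Submodule.map g ⊤).FG := by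
    rw [Submodule.map_top, LinearMap.range_eq_top.2 hg]; exact hC
  have h2 : (⊤ ⊓ LinearMap.ker g).FG := by
    rw [top_inf_eq, ← hfg, ← Submodule.map_top]
    exact Submodule.FG.map _ hA
  exact Submodule.fg_of_fg_map_of_fg_inf_ker g h1 h2

/-- Horseshoe lemma for `FPt`: the middle of a short exact sequence. -/
theorem fpt_of_ses {n : ℕ} {A B C : Type} [AddCommGroup A] [Module R A]
    [AddCommGroup B] [Module R B] [AddCommGroup C] [Module R C]
    (f : A →ₗ[R] B) (g : B →ₗ[R] C) (hf : Function.Injective f)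
    (hg : Function.Surjective g) (hfg : LinearMap.range f = LinearMap.ker g)
    (hA : FPt R n A) (hC : FPt R n C) : FPt R n B := by
  induction n generalizing A B C with
  | zero => exact finite_of_ses f g hg hfg hA hC
  | succ n ih =>
    obtain ⟨FA, _, _, fA, hA1, hA2, hA3, hA4⟩ := hA
    obtain ⟨FC, _, _, fC, hC1, hC2, hC3, hC4⟩ := hC
    obtain ⟨h, hh⟩ := Module.projective_lifting_property g fC hg
    set φ : FA × FC →ₗ[R] B := (f ∘ₗ fA).coprod h with hφ
    have hφs : Function.Surjective φ := by
      intro b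
      obtain ⟨y, hy⟩ := hC3 (g b)
      have : b - h y ∈ LinearMap.ker g := by
        simp only [LinearMap.mem_ker, map_sub]
        rw [← LinearMap.comp_apply, hh, hy, sub_self]
      rw [← hfg] at this
      obtain ⟨a, ha⟩ := this
      obtain ⟨x, hx⟩ := hA3 a
      exact ⟨(x, y), by simp [hφ, LinearMap.coprod_apply, hx, ha]⟩
    -- the maps on kernels
    have hincl : ∀ x : LinearMap.ker fA, ((x : FA), (0 : FC)) ∈ LinearMap.ker φ := by
      rintro ⟨x, hx⟩
      simp only [LinearMap.mem_ker, hφ, LinearMap.coprod_apply, map_zero, add_zero,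
        LinearMap.comp_apply]
      rw [show fA x = 0 from hx, map_zero]
    set α : LinearMap.ker fA →ₗ[R] LinearMap.ker φ :=
      LinearMap.codRestrict _ ((LinearMap.inl R FA FC) ∘ₗ (LinearMap.ker fA).subtype)
        hincl with hα
    set β : LinearMap.ker φ →ₗ[R] LinearMap.ker fC :=
      LinearMap.codRestrict _ ((LinearMap.snd R FA FC) ∘ₗ (LinearMap.ker φ).subtype)
        (by
          rintro ⟨⟨x, y⟩, hxy⟩
          simp only [LinearMap.mem_ker] at hxy ⊢
          have : g (φ (x, y)) = 0 := by rw [hxy, map_zero]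
          simp only [hφ, LinearMap.coprod_apply, map_add, LinearMap.comp_apply] at this
          have hgf : g (f (fA x)) = 0 := by
            have : f (fA x) ∈ LinearMap.ker g := hfg ▸ LinearMap.mem_range_self f (fA x)
            exact this
          rw [hgf, zero_add, ← LinearMap.comp_apply, hh] at this
          exact this) with hβ
    have hαinj : Function.Injective α := by
      rintro ⟨x, hx⟩ ⟨y, hy⟩ hxy
      simp only [hα, LinearMap.codRestrict] at hxy
      have := congrArg (Subtype.val) hxy
      simp only [LinearMap.coe_mk, AddHom.coe_mk] at this
      exact Subtype.ext (congrArg Prod.fst this)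
    have hβsurj : Function.Surjective β := by
      rintro ⟨y, hy⟩
      have h1 : h y ∈ LinearMap.ker g := by
        simp only [LinearMap.mem_ker] at hy ⊢
        rw [← LinearMap.comp_apply, hh, hy]
      rw [← hfg] at h1
      obtain ⟨a, ha⟩ := h1
      obtain ⟨x, hx⟩ := hA3 a
      have hmem : (-x, y) ∈ LinearMap.ker φ := by
        simp only [LinearMap.mem_ker, hφ, LinearMap.coprod_apply, map_neg,
          LinearMap.comp_apply]
        rw [hx, ha]
        exact neg_add_cancel _
      exact ⟨⟨(-x, y), hmem⟩, rfl⟩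
    have hrange : LinearMap.range α = LinearMap.ker β := by
      ext ⟨⟨x, y⟩, hxy⟩
      simp only [LinearMap.mem_range, LinearMap.mem_ker]
      constructor
      · rintro ⟨⟨a, ha⟩, h'⟩
        apply Subtype.ext
        have := congrArg Subtype.val h'
        simp only [hα, LinearMap.codRestrict, LinearMap.coe_mk, AddHom.coe_mk,
          LinearMap.comp_apply, LinearMap.inl_apply, Submodule.coe_subtype] at this
        simp only [hβ, LinearMap.codRestrict, LinearMap.coe_mk, AddHom.coe_mk,
          LinearMap.comp_apply, LinearMap.snd_apply, Submodule.coe_subtype]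
        simpa using (congrArg Prod.snd this).symm
      · intro h'
        have hy0 : y = 0 := congrArg Subtype.val h'
        subst hy0
        have hx0 : fA x = 0 := by
          have : φ (x, 0) = 0 := hxy
          simp only [hφ, LinearMap.coprod_apply, map_zero, add_zero] at this
          exact hf (by simpa using this)
        exact ⟨⟨x, hx0⟩, Subtype.ext (by
          simp [hα, LinearMap.codRestrict])⟩
    refine ⟨FA × FC, _, _, φ, inferInstance, inferInstance, hφs, ?_⟩
    exact ih α β hαinj hβsurj hrange hA4 hC4
end

section
variable {R : Type} [Ring R]

/-- Quotient lemma: if `0 → A → B → C → 0` is exact, `B` is `FP_{n+1}` and `A` is `FP_n`,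
then `C` is `FP_{n+1}`. -/
theorem fpt_quot {n : ℕ} {A B C : Type} [AddCommGroup A] [Module R A]
    [AddCommGroup B] [Module R B] [AddCommGroup C] [Module R C]
    (f : A →ₗ[R] B) (g : B →ₗ[R] C) (hf : Function.Injective f)
    (hg : Function.Surjective g) (hfg : LinearMap.range f = LinearMap.ker g)
    (hB : FPt R (n+1) B) (hA : FPt R n A) : FPt R (n+1) C := by
  obtain ⟨F, _, _, p, h1, h2, h3, h4⟩ := hB
  refine ⟨F, _, _, g ∘ₗ p, h1, h2, hg.comp h3, ?_⟩
  -- L := ker (g ∘ p); ses: ker p → L → A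
  set L := LinearMap.ker (g ∘ₗ p) with hL
  have hle : LinearMap.ker p ≤ L := fun x hx => by
    simp only [hL, LinearMap.mem_ker, LinearMap.comp_apply] at hx ⊢
    rw [hx, map_zero]
  set ι : LinearMap.ker p →ₗ[R] L := Submodule.inclusion hle with hι
  have hmem : ∀ x : L, p (x : F) ∈ LinearMap.range f := by
    rintro ⟨x, hx⟩
    rw [hfg]
    exact hx
  set eA := LinearEquiv.ofInjective f hf with heA
  set τ : L →ₗ[R] A := eA.symm.toLinearMap ∘ₗ
    LinearMap.codRestrict (LinearMap.range f) (p ∘ₗ L.subtype) hmem with hτ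
  have hτval : ∀ (x : L) , f (τ x) = p (x : F) := by
    intro x
    have : (eA (τ x) : B) = p (x : F) := by
      simp only [hτ, LinearMap.comp_apply, LinearEquiv.coe_coe, LinearEquiv.apply_symm_apply]
      rfl
    rwa [show ((eA (τ x)) : B) = f (τ x) from rfl] at this
  have hτsurj : Function.Surjective τ := by
    intro a
    have : f a ∈ LinearMap.ker g := hfg ▸ LinearMap.mem_range_self f a
    obtain ⟨x, hx⟩ := h3 (f a)
    have hxL : x ∈ L := by
      simp only [hL, LinearMap.mem_ker, LinearMap.comp_apply, hx]
      exact this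
    refine ⟨⟨x, hxL⟩, hf ?_⟩
    rw [hτval ⟨x, hxL⟩]
    exact hx.trans rfl
  have hrange : LinearMap.range ι = LinearMap.ker τ := by
    ext ⟨x, hx⟩
    simp only [LinearMap.mem_range, LinearMap.mem_ker]
    constructor
    · rintro ⟨⟨a, ha⟩, h'⟩
      apply hf
      rw [hτval, map_zero]
      have : a = x := congrArg Subtype.val h'
      show p x = 0
      rw [← this]
      exact ha
    · intro h'
      have : p x = 0 := by
        rw [← hτval ⟨x, hx⟩, h', map_zero]
      exact ⟨⟨x, this⟩, rfl⟩
  have hιinj : Function.Injective ι := Submodule.inclusion_injective hle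
  exact fpt_of_ses ι τ hιinj hτsurj hrange h4 hA

end
/-- An augmented projective resolution of `M`, in concrete module language. -/
structure AugRes (R : Type) [Ring R] (M : Type) [AddCommGroup M] [Module R M] : Type 1 where
  F : ℕ → Type
  [acg : ∀ i, AddCommGroup (F i)]
  [mod : ∀ i, Module R (F i)]
  d : ∀ i, F (i+1) →ₗ[R] F i
  ε : F 0 →ₗ[R] M
  proj : ∀ i, Module.Projective R (F i)
  surj : Function.Surjective ε
  exact0 : LinearMap.range (d 0) = LinearMap.ker ε
  exactS : ∀ i, LinearMap.range (d (i+1)) = LinearMap.ker (d i)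

attribute [instance] AugRes.acg AugRes.mod

variable {R : Type} [Ring R]

/-- Shift an augmented resolution to one of the first kernel/syzygy. -/
noncomputable def AugRes.shift {M : Type} [AddCommGroup M] [Module R M] (A : AugRes R M) :
    AugRes R (LinearMap.ker A.ε) where
  F i := A.F (i+1)
  acg i := A.acg (i+1)
  mod i := A.mod (i+1)
  d i := A.d (i+1)
  ε := LinearMap.codRestrict (LinearMap.ker A.ε) (A.d 0)
    (fun x => A.exact0 ▸ LinearMap.mem_range_self (A.d 0) x)
  proj i := A.proj (i+1)
  surj := by
    rintro ⟨x, hx⟩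
    rw [← A.exact0] at hx
    obtain ⟨y, hy⟩ := hx
    exact ⟨y, Subtype.ext hy⟩
  exact0 := by
    rw [LinearMap.ker_codRestrict, ← A.exactS 0]
  exactS i := A.exactS (i+1)

theorem fpt_of_augRes {M : Type} [AddCommGroup M] [Module R M] (n : ℕ)
    (A : AugRes R M) (hfin : ∀ i ≤ n, Module.Finite R (A.F i)) : FPt R n M := by
  induction n generalizing M with
  | zero =>
    rw [fpt_zero]
    have := hfin 0 (le_refl 0)
    exact Module.Finite.of_surjective A.ε A.surj
  | succ n ih =>
    exact ⟨A.F 0, _, _, A.ε, hfin 0 (by omega), A.proj 0, A.surj,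
      ih A.shift (fun i hi => hfin (i+1) (by omega))⟩

section
variable {R : Type} [Ring R]

noncomputable def augResOfRes {M : Type} [AddCommGroup M] [Module R M]
    (P : ProjectiveResolution (ModuleCat.of R M)) : AugRes R M where
  F i := P.complex.X i
  d i := (P.complex.d (i+1) i).hom
  ε := ((P.π.f 0) ≫ (HomologicalComplex.singleObjXSelf (ComplexShape.down ℕ) 0
        (ModuleCat.of R M)).hom).hom
  proj i := by
    have h : Projective (P.complex.X i) := P.projective i
    exact (IsProjective.iff_projective (R := R) (P := ↥(P.complex.X i))).mpr h
  surj := by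
    exact (ModuleCat.epi_iff_surjective _).mp inferInstance
  exact0 := by
    have h := ShortComplex.moduleCat_exact_iff_range_eq_ker _ |>.mp P.exact₀
    have hker : LinearMap.ker ((P.π.f 0) ≫ (HomologicalComplex.singleObjXSelf
        (ComplexShape.down ℕ) 0 (ModuleCat.of R M)).hom).hom = LinearMap.ker (P.π.f 0).hom := by
      show LinearMap.ker ((HomologicalComplex.singleObjXSelf (ComplexShape.down ℕ) 0
        (ModuleCat.of R M)).hom.hom ∘ₗ (P.π.f 0).hom) = _
      rw [LinearMap.ker_comp, LinearMap.ker_eq_bot.2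
        ((ModuleCat.mono_iff_injective _).mp inferInstance), Submodule.comap_bot]
    rw [hker]
    exact h
  exactS i := ShortComplex.moduleCat_exact_iff_range_eq_ker _ |>.mp (P.exact_succ i)


end
section
variable {R : Type} [Ring R]
variable {M : Type} [AddCommGroup M] [Module R M]

noncomputable def AugRes.complex (A : AugRes R M) : ChainComplex (ModuleCat R) ℕ :=
  ChainComplex.of (fun i => ModuleCat.of R (A.F i)) (fun i => ModuleCat.ofHom (A.d i))
    (fun i => by
      ext x
      show A.d i (A.d (i+1) x) = 0
      have hm : A.d (i+1) x ∈ LinearMap.ker (A.d i) :=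
        (A.exactS i) ▸ LinearMap.mem_range_self _ x
      exact hm)

lemma AugRes.complex_d (A : AugRes R M) (i : ℕ) :
    A.complex.d (i+1) i = ModuleCat.ofHom (A.d i) := by
  simp [AugRes.complex, ChainComplex.of_d]

lemma AugRes.d_comp_eps (A : AugRes R M) :
    A.complex.d 1 0 ≫ ModuleCat.ofHom A.ε = 0 := by
  rw [A.complex_d 0]
  ext x
  show A.ε (A.d 0 x) = 0
  have hm : A.d 0 x ∈ LinearMap.ker A.ε := A.exact0 ▸ LinearMap.mem_range_self _ x
  exact hm

noncomputable def AugRes.pi (A : AugRes R M) :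
    A.complex ⟶ (ChainComplex.single₀ (ModuleCat R)).obj (ModuleCat.of R M) :=
  (ChainComplex.toSingle₀Equiv A.complex (ModuleCat.of R M)).symm
    ⟨ModuleCat.ofHom A.ε, A.d_comp_eps⟩

lemma AugRes.pi_f_zero (A : AugRes R M) : A.pi.f 0 = ModuleCat.ofHom A.ε :=
  ChainComplex.toSingle₀Equiv_symm_apply_f_zero _ _

noncomputable def AugRes.toRes (A : AugRes R M) :
    ProjectiveResolution (ModuleCat.of R M) where
  complex := A.complex
  projective n := (IsProjective.iff_projective (R := R) (P := A.F n)).mp (A.proj n)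
  π := A.pi
  quasiIso := ⟨fun n => by
    cases n with
    | zero =>
      rw [ChainComplex.quasiIsoAt₀_iff, ShortComplex.quasiIso_iff_of_zeros']
      · constructor
        · rw [ShortComplex.moduleCat_exact_iff]
          intro x hx
          have hx' : A.ε x = 0 := by
            have h2 : (A.pi.f 0) x = 0 := hx
            rwa [A.pi_f_zero] at h2
          have : x ∈ LinearMap.range (A.d 0) := by
            rw [A.exact0]
            exact hx'
          obtain ⟨y, hy⟩ := this
          refine ⟨y, ?_⟩
          show (A.complex.d 1 0) y = x
          rw [A.complex_d 0]
          exact hy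
        · show Epi (A.pi.f 0)
          rw [A.pi_f_zero]
          exact (ModuleCat.epi_iff_surjective _).mpr A.surj
      all_goals rfl
    | succ n =>
      rw [quasiIsoAt_iff_exactAt']
      · rw [HomologicalComplex.exactAt_iff' _ (n+2) (n+1) n (by simp) (by simp)]
        rw [ShortComplex.moduleCat_exact_iff]
        intro x hx
        have hx' : A.d n x = 0 := by
          have h2 : (A.complex.d (n+1) n) x = 0 := hx
          rwa [A.complex_d n] at h2
        have : x ∈ LinearMap.range (A.d (n+1)) := (A.exactS n).symm ▸ hx'
        obtain ⟨y, hy⟩ := this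
        refine ⟨y, ?_⟩
        show (A.complex.d (n+2) (n+1)) y = x
        rw [A.complex_d (n+1)]
        exact hy
      · apply ChainComplex.exactAt_succ_single_obj⟩

theorem isFP_of_augRes (n : ℕ) (A : AugRes R M) (hfin : ∀ i ≤ n, Module.Finite R (A.F i)) :
    ModuleCat.IsFP R n (ModuleCat.of R M) := by
  refine ⟨A.toRes, fun i hi => ?_⟩
  have : i ≤ n := by exact_mod_cast hi
  exact hfin i this

end
/-- A projective cover of a module. -/
structure Cov (R : Type) [Ring R] (M : Type) [AddCommGroup M] [Module R M] : Type 1 where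
  F : Type
  [acg : AddCommGroup F]
  [mod : Module R F]
  π : F →ₗ[R] M
  proj : Module.Projective R F
  surj : Function.Surjective π
attribute [instance] Cov.acg Cov.mod

variable (R : Type) [Ring R]

/-- A cover adapted to the `FPt k` structure. -/
def GoodCov (k : ℕ) {M : Type} [AddCommGroup M] [Module R M] (c : Cov R M) : Prop :=
  Module.Finite R c.F ∧ ∀ j, k = j + 1 → FPt R j (LinearMap.ker c.π)

theorem exists_goodCov (k : ℕ) {M : Type} [AddCommGroup M] [Module R M]
    (h : FPt R k M) : ∃ c : Cov R M, GoodCov R k c := by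
  cases k with
  | zero =>
    have : Module.Finite R M := fpt_zero.mp h
    obtain ⟨s, f, hf⟩ := Module.Finite.exists_fin' R M
    exact ⟨⟨Fin s → R, f, inferInstance, hf⟩, inferInstance, fun j hj => by omega⟩
  | succ k =>
    obtain ⟨F, _, _, f, h1, h2, h3, h4⟩ := h
    exact ⟨@Cov.mk R _ M _ _ F _ _ f h2 h3, h1, fun j hj => by
      obtain rfl : j = k := by omega
      exact h4⟩

/-- A default (huge, free) cover. -/
noncomputable def anyCov (M : Type) [AddCommGroup M] [Module R M] : Cov R M :=
  ⟨M →₀ R, Finsupp.linearCombination R (id : M → M), inferInstance,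
    Finsupp.linearCombination_id_surjective R M⟩

noncomputable def pick (k : ℕ) (M : Type) [AddCommGroup M] [Module R M] : Cov R M :=
  letI := Classical.dec (FPt R k M)
  if h : FPt R k M then (exists_goodCov R k h).choose else anyCov R M

variable {R}

theorem pick_good {k : ℕ} {M : Type} [AddCommGroup M] [Module R M] (h : FPt R k M) :
    GoodCov R k (pick R k M) := by
  rw [pick]
  rw [dif_pos h]
  exact (exists_goodCov R k h).choose_spec

variable (R)

/-- The syzygy chain for assembling a resolution from `FPt` data. -/
noncomputable def chainK (n : ℕ) (M : Type) [AddCommGroup M] [Module R M] :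
    ℕ → ModuleCat R
  | 0 => ModuleCat.of R M
  | (i+1) => ModuleCat.of R (LinearMap.ker (pick R (n - i) (chainK n M i)).π)

variable {R}

theorem chainK_fpt {n : ℕ} {M : Type} [AddCommGroup M] [Module R M] (hM : FPt R n M) :
    ∀ i, i ≤ n → FPt R (n - i) (chainK R n M i) := by
  intro i
  induction i with
  | zero => intro _; exact hM
  | succ i ih =>
    intro hi
    have hKi : FPt R (n - i) (chainK R n M i) := ih (by omega)
    have hgood := pick_good hKi
    have heq : n - i = (n - (i+1)) + 1 := by omega
    exact hgood.2 (n - (i+1)) heq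

variable (R)

noncomputable def augResOfFpt (n : ℕ) (M : Type) [AddCommGroup M] [Module R M] :
    AugRes R M where
  F i := (pick R (n - i) (chainK R n M i)).F
  d i := (LinearMap.ker (pick R (n - i) (chainK R n M i)).π).subtype ∘ₗ
    (pick R (n - (i+1)) (chainK R n M (i+1))).π
  ε := (pick R (n - 0) (chainK R n M 0)).π
  proj i := (pick R (n - i) (chainK R n M i)).proj
  surj := (pick R (n - 0) (chainK R n M 0)).surj
  exact0 := by
    ext x
    constructor
    · rintro ⟨y, rfl⟩
      exact Subtype.property (show LinearMap.ker (pick R (n - 0) (chainK R n M 0)).π from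
        (pick R (n - 1) (chainK R n M 1)).π y)
    · intro hx
      obtain ⟨y, hy⟩ := (pick R (n - 1) (chainK R n M 1)).surj
        (⟨x, hx⟩ : LinearMap.ker (pick R (n - 0) (chainK R n M 0)).π)
      exact ⟨y, congrArg Subtype.val hy⟩
  exactS i := by
    ext x
    constructor
    · rintro ⟨y, rfl⟩
      have h1 := Subtype.property
        (show LinearMap.ker (pick R (n - (i+1)) (chainK R n M (i+1))).π from
          (pick R (n - (i+2)) (chainK R n M (i+2))).π y)
      have h2 : (pick R (n - (i+1)) (chainK R n M (i+1))).π
          ((LinearMap.ker (pick R (n - (i+1)) (chainK R n M (i+1))).π).subtype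
            ((pick R (n - (i+2)) (chainK R n M (i+2))).π y)) = 0 := h1
      rw [LinearMap.mem_ker]
      have h3 := congrArg Subtype.val h2
      exact h3
    · intro hx
      have h0 : (pick R (n - (i+1)) (chainK R n M (i+1))).π x = 0 :=
        Subtype.ext (LinearMap.mem_ker.1 hx)
      obtain ⟨y, hy⟩ := (pick R (n - (i+2)) (chainK R n M (i+2))).surj
        (⟨x, h0⟩ : LinearMap.ker (pick R (n - (i+1)) (chainK R n M (i+1))).π)
      exact ⟨y, congrArg Subtype.val hy⟩

theorem augResOfFpt_fin {n : ℕ} {M : Type} [AddCommGroup M] [Module R M]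
    (hM : FPt R n M) : ∀ i ≤ n, Module.Finite R ((augResOfFpt R n M).F i) :=
  fun i hi => (pick_good (chainK_fpt hM i hi)).1

section
variable {R : Type} [Ring R]
theorem main' (m : ℕ) :
    ∀ (Q : ℕ → Type) [∀ i, AddCommGroup (Q i)] [∀ i, Module R (Q i)]
      (V : Type) [AddCommGroup V] [Module R V]
      (q : ∀ i : ℕ, Q (i + 1) →ₗ[R] Q i) (ε : Q 0 →ₗ[R] V)
      (_ : Function.Surjective ε)
      (_ : ε ∘ₗ q 0 = 0)
      (_ : ∀ i : ℕ, q i ∘ₗ q (i + 1) = 0)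
      (_ : ∀ i ≤ m, FPt R (m - i) (Q i))
      (_ : 1 ≤ m → FPt R (m - 1) (complexHomology R (q 0) ε))
      (_ : ∀ i, i + 2 ≤ m → FPt R (m - i - 2) (complexHomology R (q (i+1)) (q i))),
      FPt R m V := by
  induction m with
  | zero =>
    intro Q _ _ V _ _ q ε hsurj hc0 hc hQ hH0 hH
    rw [fpt_zero]
    have : Module.Finite R (Q 0) := fpt_zero.mp (hQ 0 (le_refl 0))
    exact Module.Finite.of_surjective ε hsurj
  | succ m ih =>
    intro Q _ _ V _ _ q ε hsurj hc0 hc hQ hH0 hH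
    -- Step 1: B0 := range (q 0) is FPt m, via the induction hypothesis on the shifted complex
    have hB0 : FPt R m (LinearMap.range (q 0)) := by
      refine ih (fun i => Q (i+1)) (LinearMap.range (q 0)) (fun i => q (i+1))
        ((q 0).rangeRestrict) (LinearMap.surjective_rangeRestrict (q 0)) ?_
        (fun i => hc (i+1)) ?_ ?_ ?_
      · ext x
        have hx : q 0 (q 1 x) = 0 := LinearMap.ext_iff.mp (hc 0) x
        simp only [LinearMap.comp_apply, LinearMap.zero_apply]
        simpa using hx
      · intro i hi
        have h := hQ (i+1) (by omega)
        rwa [Nat.succ_sub_succ] at h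
      · intro hm
        have h := hH 0 (by omega)
        have e : m + 1 - 0 - 2 = m - 1 := by omega
        rw [e] at h
        show FPt R (m-1) (LinearMap.ker ((q 0).rangeRestrict) ⧸
          (LinearMap.range (q 1)).comap (LinearMap.ker ((q 0).rangeRestrict)).subtype)
        rw [LinearMap.ker_rangeRestrict]
        exact h
      · intro i hi
        have h := hH (i+1) (by omega)
        have e : m + 1 - (i+1) - 2 = m - i - 2 := by omega
        rw [e] at h
        exact h
    -- Step 2: Z0 := ker ε is FPt m
    have hle : LinearMap.range (q 0) ≤ LinearMap.ker ε := by
      rintro x ⟨y, rfl⟩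
      show ε (q 0 y) = 0
      exact LinearMap.ext_iff.mp hc0 y
    have hZ0 : FPt R m (LinearMap.ker ε) := by
      have hH0' : FPt R m (complexHomology R (q 0) ε) := by
        have h := hH0 (by omega)
        have e : m + 1 - 1 = m := by omega
        rwa [e] at h
      refine fpt_of_ses (Submodule.inclusion hle)
        ((LinearMap.range (q 0)).comap (LinearMap.ker ε).subtype).mkQ
        (Submodule.inclusion_injective hle) (Submodule.mkQ_surjective _) ?_ hB0 hH0'
      rw [Submodule.ker_mkQ, Submodule.range_inclusion]
    -- Step 3: conclude for V
    exact fpt_quot (LinearMap.ker ε).subtype ε (Submodule.injective_subtype _) hsurj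
      (Submodule.range_subtype _) (hQ 0 (by omega)) hZ0

end

/-- Lemma 4: let `𝒬 : ⋯ → Q i →^{dᵢ} Q (i-1) → ⋯ → Q 0 →^{d₀} V → 0` be a (not necessarily
exact) complex of `R`-modules with `d₀` surjective, `Q i` of type `FP (m - i)` for all
`0 ≤ i ≤ m`, and with homology `Hᵢ(𝒬)` of type `FP (m - i - 1)` for all `0 ≤ i ≤ m - 1`.
Then `V` is of type `FP m`.

Here `q i : Q (i+1) → Q i` is the paper'"'"'s `d_{i+1}` and `ε : Q 0 → V` is `d₀`;
`H₀(𝒬) = ker ε / im (q 0)` and `H_{i+1}(𝒬) = ker (q i) / im (q (i+1))`. -/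
theorem fp_of_complex_with_fp_homology (R : Type) [Ring R] (m : ℕ)
    (Q : ℕ → Type) [∀ i, AddCommGroup (Q i)] [∀ i, Module R (Q i)]
    (V : Type) [AddCommGroup V] [Module R V]
    (q : ∀ i : ℕ, Q (i + 1) →ₗ[R] Q i) (ε : Q 0 →ₗ[R] V)
    (hsurj : Function.Surjective ε)
    (hc0 : ε ∘ₗ q 0 = 0)
    (hc : ∀ i : ℕ, q i ∘ₗ q (i + 1) = 0)
    (hQ : ∀ i : ℕ, i ≤ m → ModuleCat.IsFP R ((m : ℤ) - i) (ModuleCat.of R (Q i)))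
    (hH0 : 1 ≤ m → ModuleCat.IsFP R ((m : ℤ) - 1) (ModuleCat.of R (complexHomology R (q 0) ε)))
    (hH : ∀ i : ℕ, i + 2 ≤ m →
      ModuleCat.IsFP R ((m : ℤ) - (i + 1) - 1)
        (ModuleCat.of R (complexHomology R (q (i + 1)) (q i)))) :
    ModuleCat.IsFP R m (ModuleCat.of R V) := by
  have hQ' : ∀ i ≤ m, FPt R (m - i) (Q i) := by
    intro i hi
    obtain ⟨P, hP⟩ := hQ i hi
    exact fpt_of_augRes (m - i) (augResOfRes P) (fun j hj => hP j (by omega))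
  have hH0' : 1 ≤ m → FPt R (m - 1) (complexHomology R (q 0) ε) := by
    intro hm
    obtain ⟨P, hP⟩ := hH0 hm
    exact fpt_of_augRes (m - 1) (augResOfRes P) (fun j hj => hP j (by omega))
  have hH' : ∀ i, i + 2 ≤ m → FPt R (m - i - 2) (complexHomology R (q (i+1)) (q i)) := by
    intro i hi
    obtain ⟨P, hP⟩ := hH i hi
    exact fpt_of_augRes (m - i - 2) (augResOfRes P) (fun j hj => hP j (by omega))
  have hV : FPt R m V := main' m Q V q ε hsurj hc0 hc hQ' hH0' hH'
  exact isFP_of_augRes m (augResOfFpt R m V) (augResOfFpt_fin R hV)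
end

section
/- Let H and G be groups with H torsion-free, let X be a right G-set, and let Γ = H ≀_X G = H^{(X)} ⋊ G be the permutational wreath product. Then every finite subgroup of Γ is conjugate in Γ to a subgroup of G. -/
/-- The base group `H^{(X)}` of the permutational wreath product: the subgroup of `X → H`
consisting of finitely supported functions. -/
def restrictedProduct (H X : Type) [Group H] : Subgroup (X → H) where
  carrier := {f | (Function.mulSupport f).Finite}
  one_mem' := by simp [Set.mem_setOf_eq, Function.mulSupport_one]
  mul_mem' := by
    intro f g hf hg
    exact (hf.union hg).subset (Function.mulSupport_mul f g)
  inv_mem' := by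
    intro f hf
    simpa [Function.mulSupport_inv] using hf

variable (H X G : Type) [Group H] [Group G] [MulAction G X]

/-- The permutation action of `G` on `X → H` induced by the `G`-action on `X`. -/
def permAut : G →* MulAut (X → H) where
  toFun g := MulEquiv.arrowCongr (MulAction.toPerm g) (MulEquiv.refl H)
  map_one' := by
    apply MulEquiv.ext
    intro f
    funext x
    simp [MulEquiv.arrowCongr, MulAction.toPerm]
  map_mul' g₁ g₂ := by
    apply MulEquiv.ext
    intro f
    funext x
    simp [MulEquiv.arrowCongr, MulAction.toPerm, mul_smul]

lemma permAut_mem (g : G) {f : X → H} (hf : f ∈ restrictedProduct H X) :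
    permAut H X G g f ∈ restrictedProduct H X := by
  have h : Function.mulSupport (permAut H X G g f) =
      (fun x : X => g⁻¹ • x) ⁻¹' Function.mulSupport f :=
    Function.mulSupport_comp_eq_preimage f fun x => g⁻¹ • x
  show (Function.mulSupport (permAut H X G g f)).Finite
  rw [h]
  exact hf.preimage (MulAction.injective g⁻¹).injOn

/-- The action of `G` on the base group `H^{(X)}` (finitely supported functions `X → H`),
permuting the coordinates via the `G`-action on `X`. -/
def wreathAut : G →* MulAut ↥(restrictedProduct H X) where
  toFun g :=
    { toFun := fun f => ⟨permAut H X G g f, permAut_mem H X G g f.2⟩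
      invFun := fun f => ⟨permAut H X G g⁻¹ f, permAut_mem H X G g⁻¹ f.2⟩
      left_inv := fun f => by
        apply Subtype.ext
        show (permAut H X G g⁻¹) ((permAut H X G g) (f : X → H)) = (f : X → H)
        have h : (permAut H X G g⁻¹) ((permAut H X G g) (f : X → H)) =
            ((permAut H X G g⁻¹) * (permAut H X G g)) (f : X → H) := rfl
        rw [h, ← map_mul, inv_mul_cancel, map_one]
        rfl
      right_inv := fun f => by
        apply Subtype.ext
        show (permAut H X G g) ((permAut H X G g⁻¹) (f : X → H)) = (f : X → H)
        have h : (permAut H X G g) ((permAut H X G g⁻¹) (f : X → H)) =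
            ((permAut H X G g) * (permAut H X G g⁻¹)) (f : X → H) := rfl
        rw [h, ← map_mul, mul_inv_cancel, map_one]
        rfl
      map_mul' := fun a b => by
        apply Subtype.ext
        show permAut H X G g ((a : X → H) * (b : X → H)) = _
        exact map_mul ((permAut H X G) g) _ _ }
  map_one' := by
    apply MulEquiv.ext
    intro f
    apply Subtype.ext
    show (permAut H X G 1) (f : X → H) = (f : X → H)
    rw [map_one]
    rfl
  map_mul' g₁ g₂ := by
    apply MulEquiv.ext
    intro f
    apply Subtype.ext
    show (permAut H X G (g₁ * g₂)) (f : X → H) =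
      (permAut H X G g₁) ((permAut H X G g₂) (f : X → H))
    rw [map_mul]
    rfl

/-- The permutational wreath product `H ≀_X G = H^{(X)} ⋊ G`. -/
def Wreath : Type := (restrictedProduct H X) ⋊[wreathAut H X G] G

instance : Group (Wreath H X G) :=
  inferInstanceAs (Group ((restrictedProduct H X) ⋊[wreathAut H X G] G))

/-- The copy of `G` inside the wreath product `H ≀_X G`. -/
def wreathInr : G →* Wreath H X G := SemidirectProduct.inr

section AuxProof

open SemidirectProduct Function Pointwise

variable {H X G}

lemma wreathAut_apply_val (g : G) (F : restrictedProduct H X) (y : X) :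
    ((wreathAut H X G g F : restrictedProduct H X) : X → H) y = (F : X → H) (g⁻¹ • y) := rfl

local notation "Γ'" => (restrictedProduct H X) ⋊[wreathAut H X G] G

lemma left_apply_eq_one_of_fixes
    (hH : ∀ h : H, h ≠ 1 → ¬IsOfFinOrder h)
    (K : Subgroup Γ') (hK : Finite K)
    (w : Γ') (hw : w ∈ K) (x : X) (hx : rightHom w • x = x) :
    ((w.left : restrictedProduct H X) : X → H) x = 1 := by
  have key : ∀ n : ℕ, rightHom (w ^ n) • x = x ∧
      (((w ^ n).left : restrictedProduct H X) : X → H) x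
        = (((w.left : restrictedProduct H X) : X → H) x) ^ n := by
    intro n
    induction n with
    | zero => simp
    | succ n ih =>
      constructor
      · rw [pow_succ, map_mul, mul_smul, hx, ih.1]
      · rw [pow_succ]
        have h1 : ((w ^ n * w).left : X → H) x
            = (((w ^ n).left : X → H) x) *
              ((wreathAut H X G (rightHom (w ^ n)) w.left : restrictedProduct H X) : X → H) x := by
          rw [mul_left]; rfl
        have harg : (rightHom (w ^ n))⁻¹ • x = x := by
          rw [inv_smul_eq_iff, ih.1]
        rw [h1, wreathAut_apply_val, harg, ih.2, pow_succ]
  set k : K := ⟨w, hw⟩ with hk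
  obtain ⟨n, hn, hkn⟩ := isOfFinOrder_iff_pow_eq_one.mp (isOfFinOrder_of_finite k)
  have hwn : w ^ n = 1 := by
    have : ((k ^ n : K) : Γ') = ((1 : K) : Γ') := by rw [hkn]
    simpa using this
  have hpow : (((w.left : restrictedProduct H X) : X → H) x) ^ n = 1 := by
    rw [← (key n).2, hwn]; rfl
  by_contra hne
  exact hH _ hne (isOfFinOrder_iff_pow_eq_one.mpr ⟨n, hn, hpow⟩)

theorem aux_conj
    (hH : ∀ h : H, h ≠ 1 → ¬IsOfFinOrder h)
    (K : Subgroup Γ') (hK : Finite K) :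
    ∃ δ : Γ', K.map (MulAut.conj δ).toMonoidHom ≤ (inr : G →* Γ').range := by
  classical
  let s : Setoid X :=
    ⟨fun x y => ∃ k : K, rightHom (k : Γ') • x = y,
     ⟨fun x => ⟨1, by simp⟩,
      fun {x y} ⟨k, hk⟩ => ⟨k⁻¹, by rw [← hk]; simp [smul_smul]⟩,
      fun {x y z} ⟨k, hk⟩ ⟨k', hk'⟩ => ⟨k' * k, by
        rw [Subgroup.coe_mul, map_mul, mul_smul, hk, hk']⟩⟩⟩
  let rep : X → X := fun y => (Quotient.mk s y).out
  have hrep_rel : ∀ y : X, ∃ k : K, rightHom (k : Γ') • rep y = y := by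
    intro y
    exact Quotient.exact (Quotient.out_eq (Quotient.mk s y))
  have hrep_eq : ∀ y z : X, (∃ k : K, rightHom (k : Γ') • y = z) → rep y = rep z := by
    intro y z h
    exact congrArg Quotient.out (Quotient.sound h)
  let l : X → K := fun y => (hrep_rel y).choose
  have hl : ∀ y : X, rightHom ((l y : K) : Γ') • rep y = y := fun y => (hrep_rel y).choose_spec
  -- well-definedness
  have hwd : ∀ (x : X) (k k' : K), rightHom (k : Γ') • x = rightHom (k' : Γ') • x →
      (((k : Γ')⁻¹.left : restrictedProduct H X) : X → H) x
        = (((k' : Γ')⁻¹.left : restrictedProduct H X) : X → H) x := by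
    intro x k k' hkk'
    have hmmem : ((k' : Γ')⁻¹ * (k : Γ')) ∈ K := K.mul_mem (K.inv_mem k'.2) k.2
    set m : Γ' := (k' : Γ')⁻¹ * (k : Γ') with hm
    have hmx : rightHom m • x = x := by
      rw [hm, map_mul, mul_smul, hkk', map_inv, inv_smul_smul]
    have hminv : rightHom m⁻¹ • x = x := by
      rw [map_inv, inv_smul_eq_iff, hmx]
    have h1 : (((m⁻¹).left : restrictedProduct H X) : X → H) x = 1 :=
      left_apply_eq_one_of_fixes hH K hK m⁻¹ (K.inv_mem hmmem) x hminv
    have hdec : (k : Γ')⁻¹ = m⁻¹ * (k' : Γ')⁻¹ := by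
      rw [hm]; group
    rw [hdec]
    have h2 : ((m⁻¹ * (k' : Γ')⁻¹).left : X → H) x
        = (((m⁻¹).left : X → H) x) *
          ((wreathAut H X G (rightHom m⁻¹) ((k' : Γ')⁻¹.left) : restrictedProduct H X) : X → H) x := by
      rw [mul_left]; rfl
    have harg : (rightHom m⁻¹)⁻¹ • x = x := by
      rw [map_inv, inv_inv, hmx]
    rw [h2, h1, one_mul, wreathAut_apply_val, harg]
  -- the coboundary function
  let f : X → H := fun y => ((((l y : K) : Γ')⁻¹.left : restrictedProduct H X) : X → H) (rep y)
  -- main cocycle identity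
  have hmain : ∀ (w : Γ'), w ∈ K → ∀ y : X,
      f ((rightHom w)⁻¹ • y) = f y * ((w.left : restrictedProduct H X) : X → H) y := by
    intro w hw y
    set x := rep y with hx
    have hreps : rep ((rightHom w)⁻¹ • y) = x := by
      rw [hx]
      refine (hrep_eq y ((rightHom w)⁻¹ • y) ⟨⟨w, hw⟩⁻¹, ?_⟩).symm
      simp
    set z := (rightHom w)⁻¹ • y with hz
    have hlz : rightHom ((l z : K) : Γ') • x = z := by rw [← hreps]; exact hl z
    have hcand : rightHom (((⟨w, hw⟩ : K)⁻¹ * l y : K) : Γ') • x = z := by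
      rw [Subgroup.coe_mul, map_mul, mul_smul]
      show rightHom ((⟨w, hw⟩ : K) : Γ')⁻¹ • _ = z
      rw [hl y, hz, map_inv]
    have heq := hwd x (l z) ((⟨w, hw⟩ : K)⁻¹ * l y) (by rw [hlz, hcand])
    have hfz : f z = ((((((⟨w, hw⟩ : K)⁻¹ * l y : K) : Γ'))⁻¹.left : restrictedProduct H X) : X → H) x := by
      show ((((l z : K) : Γ')⁻¹.left : restrictedProduct H X) : X → H) (rep z) = _
      rw [hreps]; exact heq
    rw [hfz]
    have hdec : ((((⟨w, hw⟩ : K)⁻¹ * l y : K) : Γ'))⁻¹ = ((l y : K) : Γ')⁻¹ * w := by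
      rw [Subgroup.coe_mul]
      show ((((⟨w, hw⟩ : K) : Γ'))⁻¹ * _)⁻¹ = _
      group
    rw [hdec]
    have h2 : ((((l y : K) : Γ')⁻¹ * w).left : X → H) x
        = ((((l y : K) : Γ')⁻¹.left : X → H) x) *
          ((wreathAut H X G (rightHom ((l y : K) : Γ')⁻¹) w.left : restrictedProduct H X) : X → H) x := by
      rw [mul_left]; rfl
    have harg : (rightHom ((l y : K) : Γ')⁻¹)⁻¹ • x = y := by
      rw [map_inv, inv_inv, hl y]
    rw [h2, wreathAut_apply_val, harg]
  -- finite support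
  have hfin : (Function.mulSupport f).Finite := by
    have hsub : Function.mulSupport f ⊆
        ⋃ k : K, (rightHom (k : Γ') : G) •
          (Function.mulSupport (((k : Γ')⁻¹.left : restrictedProduct H X) : X → H) : Set X) := by
      intro y hy
      have hy' : rep y ∈
          Function.mulSupport ((((l y : K) : Γ')⁻¹.left : restrictedProduct H X) : X → H) := hy
      refine Set.mem_iUnion.mpr ⟨l y, Set.mem_smul_set_iff_inv_smul_mem.mpr ?_⟩
      have hxy : (rightHom ((l y : K) : Γ'))⁻¹ • y = rep y := by
        rw [inv_smul_eq_iff, hl y]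
      rw [hxy]
      exact hy'
    refine Set.Finite.subset (Set.finite_iUnion fun k : K => ?_) hsub
    exact Set.Finite.smul_set ((k : Γ')⁻¹.left).2
  -- conclusion
  set F : restrictedProduct H X := ⟨f, hfin⟩ with hF
  refine ⟨inl F, ?_⟩
  rintro u ⟨v, hv, rfl⟩
  have hleft : ((MulAut.conj (inl F)).toMonoidHom v).left = 1 := by
    have hc : (MulAut.conj (inl F)).toMonoidHom v = inl F * v * inl (F⁻¹) := by
      rw [map_inv]; rfl
    rw [hc]
    apply Subtype.ext
    funext y
    have expand : (((inl F * v * inl (F⁻¹)).left : restrictedProduct H X) : X → H) y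
        = f y * ((v.left : restrictedProduct H X) : X → H) y
          * (f ((rightHom v)⁻¹ • y))⁻¹ := by
      rw [mul_left, mul_left]
      simp only [left_inl, right_inl, map_one, MulAut.one_apply, mul_right, one_mul]
      rw [Subgroup.coe_mul, Pi.mul_apply, Subgroup.coe_mul, Pi.mul_apply, wreathAut_apply_val]
      rfl
    rw [expand, hmain v hv y]
    show _ = ((1 : restrictedProduct H X) : X → H) y
    rw [OneMemClass.coe_one, Pi.one_apply]
    group
  exact ⟨((MulAut.conj (inl F)).toMonoidHom v).right, by
    apply SemidirectProduct.ext
    · rw [left_inr, hleft]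
    · rw [right_inr]⟩

end AuxProof
/-- Theorem (finite subgroups of wreath products): let `H` and `G` be groups with `H`
torsion-free, let `X` be a `G`-set, and let `Γ = H ≀_X G` be the permutational wreath
product.  Then every finite subgroup of `Γ` is conjugate in `Γ` to a subgroup of `G`. -/
theorem finite_subgroup_of_wreath_conjugate_into_top_group
    (hH : ∀ h : H, h ≠ 1 → ¬IsOfFinOrder h)
    (K : Subgroup (Wreath H X G)) (hK : Finite K) :
    ∃ δ : Wreath H X G,
      K.map (MulAut.conj δ).toMonoidHom ≤ (wreathInr H X G).range := by
  exact aux_conj hH K hK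
end

section
/- Let Γ = H ≀_X G be a permutational wreath product and K a finite subgroup of G. Then the centralizer of K in Γ decomposes as C_Γ(K) = C_M(K) ⋊ C_G(K), and this group is isomorphic to the wreath product H ≀_{K\X} C_G(K), where M = H^{(X)} is the base group and K\X denotes the set of K-orbits on X. -/
variable (H X G : Type) [Group H] [Group G] [MulAction G X]

/-- For `K` a subgroup of `G`, the centralizer `C_G(K)` acts naturally on the set `K\X` of
`K`-orbits on `X`. -/
instance centralizerQuotientAction (K : Subgroup G) :
    MulAction ↥(Subgroup.centralizer (K : Set G)) (Quotient (MulAction.orbitRel K X)) where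
  smul c := Quotient.map (fun x => (c : G) • x) (by
    intro a b hab
    obtain ⟨k, hk⟩ := hab
    refine ⟨k, ?_⟩
    have hc := (Subgroup.mem_centralizer_iff.1 c.2) (k : G) k.2
    show (k : G) • ((c : G) • b) = (c : G) • a
    rw [← hk]
    show (k : G) • ((c : G) • b) = (c : G) • ((k : G) • b)
    rw [smul_smul, smul_smul, hc])
  one_smul q := by
    induction q using Quotient.inductionOn with
    | h x => exact congrArg (Quotient.mk _) (one_smul G x)
  mul_smul c₁ c₂ q := by
    induction q using Quotient.inductionOn with
    | h x =>
      show Quotient.mk _ (((c₁ : G) * (c₂ : G)) • x) = _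
      rw [mul_smul]
      rfl


section Aux

variable {H X G}

lemma mem_char (K : Subgroup G) (γ : (restrictedProduct H X) ⋊[wreathAut H X G] G) :
    γ ∈ Subgroup.centralizer ((K.map (SemidirectProduct.inr :
        G →* (restrictedProduct H X) ⋊[wreathAut H X G] G)) :
      Set ((restrictedProduct H X) ⋊[wreathAut H X G] G)) ↔
      (∀ k : K, wreathAut H X G (k : G) γ.left = γ.left) ∧
        γ.right ∈ Subgroup.centralizer (K : Set G) := by
  rw [Subgroup.mem_centralizer_iff]
  constructor
  · intro h
    constructor
    · intro k
      have hk : (SemidirectProduct.inr (k : G) : (restrictedProduct H X) ⋊[wreathAut H X G] G)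
          ∈ (K.map (SemidirectProduct.inr :
            G →* (restrictedProduct H X) ⋊[wreathAut H X G] G) : Set _) :=
        Subgroup.mem_map.2 ⟨(k : G), k.2, rfl⟩
      have := congrArg SemidirectProduct.left (h _ hk)
      simpa using this
    · rw [Subgroup.mem_centralizer_iff]
      intro g hg
      have hk : (SemidirectProduct.inr g : (restrictedProduct H X) ⋊[wreathAut H X G] G)
          ∈ (K.map (SemidirectProduct.inr :
            G →* (restrictedProduct H X) ⋊[wreathAut H X G] G) : Set _) :=
        Subgroup.mem_map.2 ⟨g, hg, rfl⟩
      have := congrArg SemidirectProduct.right (h _ hk)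
      simpa using this
  · rintro ⟨h1, h2⟩ m hm
    rw [SetLike.mem_coe, Subgroup.mem_map] at hm
    obtain ⟨g, hg, rfl⟩ := hm
    have hL : (SemidirectProduct.inr g * γ).left = (γ * SemidirectProduct.inr g).left := by
      simpa using h1 ⟨g, hg⟩
    have hR : (SemidirectProduct.inr g * γ).right = (γ * SemidirectProduct.inr g).right := by
      simpa using Subgroup.mem_centralizer_iff.1 h2 g hg
    cases' h : (SemidirectProduct.inr g * γ) with a b
    cases' h' : (γ * SemidirectProduct.inr g) with a' b'
    rw [h, h'] at hL hR
    simp only at hL hR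
    simp [hL, hR]


variable {K : Subgroup G}

omit [Group H] in
lemma desc (f : X → H) (hf : ∀ (k : K) (x : X), f ((k : G) • x) = f x) :
    ∀ a b : X, (MulAction.orbitRel K X).r a b → f a = f b := by
  intro a b hab
  obtain ⟨k, hk⟩ := hab
  rw [← hk]
  exact hf k b

lemma inv_of_comm {f : ↥(restrictedProduct H X)}
    (hf : ∀ k : K, wreathAut H X G (k : G) f = f) (k : K) (x : X) :
    (f : X → H) ((k : G) • x) = (f : X → H) x := by
  have h1 : (f : X → H) ((((k⁻¹ : K) : G))⁻¹ • x) = (f : X → H) x :=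
    congrFun (congrArg Subtype.val (hf k⁻¹)) x
  simpa using h1

lemma fin_lift {f : X → H} (h : ∀ a b : X, (MulAction.orbitRel K X).r a b → f a = f b)
    (hf : (Function.mulSupport f).Finite) :
    (Function.mulSupport (Quotient.lift f h :
      Quotient (MulAction.orbitRel K X) → H)).Finite := by
  apply (hf.image (Quotient.mk _)).subset
  intro q hq
  induction q using Quotient.inductionOn with
  | h x => exact ⟨x, hq, rfl⟩

lemma fin_comp [Finite ↥K] {F : Quotient (MulAction.orbitRel K X) → H}
    (hF : (Function.mulSupport F).Finite) :
    (Function.mulSupport (F ∘ Quotient.mk (MulAction.orbitRel K X))).Finite := by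
  rw [Function.mulSupport_comp_eq_preimage]
  have he : (Quotient.mk (MulAction.orbitRel K X) ⁻¹' Function.mulSupport F) =
      ⋃ q ∈ Function.mulSupport F, Quotient.mk (MulAction.orbitRel K X) ⁻¹' {q} := by
    ext y; simp
  rw [he]
  apply hF.biUnion
  intro q _
  induction q using Quotient.inductionOn with
  | h x =>
    have horb : (Quotient.mk (MulAction.orbitRel K X) ⁻¹'
        {Quotient.mk (MulAction.orbitRel K X) x}) = MulAction.orbit K x := by
      ext y
      simp only [Set.mem_preimage, Set.mem_singleton_iff]
      rw [Quotient.eq]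
      exact Iff.rfl
    rw [horb]
    exact Set.finite_range _

variable (K) in
def centMulEquiv [Finite ↥K] :
    ↥(Subgroup.centralizer ((K.map (SemidirectProduct.inr :
        G →* (restrictedProduct H X) ⋊[wreathAut H X G] G)) :
      Set ((restrictedProduct H X) ⋊[wreathAut H X G] G))) ≃*
    ((restrictedProduct H (Quotient (MulAction.orbitRel K X)))
      ⋊[wreathAut H (Quotient (MulAction.orbitRel K X))
          ↥(Subgroup.centralizer (K : Set G))]
      ↥(Subgroup.centralizer (K : Set G))) where
  toFun γ :=
    ⟨⟨Quotient.lift (γ.1.left : X → H)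
        (desc _ (fun k x => inv_of_comm ((mem_char K γ.1).1 γ.2).1 k x)),
      fin_lift _ γ.1.left.2⟩,
     ⟨γ.1.right, ((mem_char K γ.1).1 γ.2).2⟩⟩
  invFun p :=
    ⟨⟨⟨Subtype.val p.left ∘
        Quotient.mk (MulAction.orbitRel K X), fin_comp p.left.2⟩,
      (p.right : G)⟩, by
      rw [mem_char]
      refine ⟨fun k => Subtype.ext (funext fun x => ?_), p.right.2⟩
      show Subtype.val p.left (Quotient.mk (MulAction.orbitRel K X) ((k : G)⁻¹ • x)) =
        Subtype.val p.left (Quotient.mk (MulAction.orbitRel K X) x)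
      exact congrArg _ (Quotient.sound ⟨k⁻¹, rfl⟩)⟩
  left_inv γ := rfl
  right_inv p := by
    refine SemidirectProduct.ext ?_ rfl
    exact Subtype.ext (funext fun q => Quotient.inductionOn q fun x => rfl)
  map_mul' γ₁ γ₂ := by
    refine SemidirectProduct.ext ?_ rfl
    exact Subtype.ext (funext fun q => Quotient.inductionOn q fun x => rfl)

end Aux

/-- Theorem (centralizers in wreath products): let `Γ = H ≀_X G` be a permutational wreath
product and `K` a finite subgroup of `G`.  Then the centralizer of `K` in `Γ` decomposes as
`C_Γ(K) = C_M(K) ⋊ C_G(K)` (where `M = H^{(X)}` is the base group), and it is isomorphic to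
the wreath product `H ≀_{K\X} C_G(K)`. -/
theorem centralizer_in_wreath (K : Subgroup G) (hKfin : Finite K) :
    (∀ γ : (restrictedProduct H X) ⋊[wreathAut H X G] G,
        γ ∈ Subgroup.centralizer ((K.map (SemidirectProduct.inr :
            G →* (restrictedProduct H X) ⋊[wreathAut H X G] G)) :
          Set ((restrictedProduct H X) ⋊[wreathAut H X G] G)) ↔
          (∀ k : K, wreathAut H X G (k : G) γ.left = γ.left) ∧
            γ.right ∈ Subgroup.centralizer (K : Set G)) ∧
      Nonempty
        ((Subgroup.centralizer ((K.map (SemidirectProduct.inr :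
            G →* (restrictedProduct H X) ⋊[wreathAut H X G] G)) :
          Set ((restrictedProduct H X) ⋊[wreathAut H X G] G))) ≃*
          ((restrictedProduct H (Quotient (MulAction.orbitRel K X)))
            ⋊[wreathAut H (Quotient (MulAction.orbitRel K X))
                ↥(Subgroup.centralizer (K : Set G))]
            ↥(Subgroup.centralizer (K : Set G)))) := by
  haveI := hKfin
  exact ⟨mem_char K, ⟨centMulEquiv K⟩⟩
end

section
/- Let G be a group, w an element of a semi-induced ZG-module with stabilizer G₀ = Stab_G(w), and suppose there exists t ∈ G with t·w = −w. Then t² ∈ G₀, the subgroup K₀ = ⟨G₀, t⟩ contains G₀ as a normal subgroup of index 2, and the cyclic ZG-submodule generated by w is isomorphic to ZG ⊗_{ZK₀} V₀, where V₀ ≅ Z as an abelian group, G₀ acts trivially on V₀, and K₀/G₀ acts by −1. -/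
variable {G : Type} [Group G] {S : Type} [AddCommGroup S] [Module ℤ S]

/-- The stabilizer of a vector `w` under a representation `ρ` of `G` on `S`. -/
def repStabilizer (ρ : Representation ℤ G S) (w : S) : Subgroup G where
  carrier := {g | ρ g w = w}
  one_mem' := by simp
  mul_mem' := by
    intro a b ha hb
    simp only [Set.mem_setOf_eq] at *
    rw [map_mul, Module.End.mul_apply, hb, ha]
  inv_mem' := by
    intro a ha
    simp only [Set.mem_setOf_eq] at *
    calc ρ a⁻¹ w = ρ a⁻¹ (ρ a w) := by rw [ha]
    _ = ρ (a⁻¹ * a) w := by rw [map_mul]; rfl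
    _ = w := by simp

/-- Lemma (structure of cyclic semi-induced modules): let `S` be a semi-induced `ℤG`-module
with `ℤ`-basis indexed by `ι` (so `G` permutes the basis vectors up to sign), let `w` be a
basis element with stabilizer `G₀`, and suppose `t • w = −w` for some `t ∈ G`.  Then
`t² ∈ G₀`, the subgroup `K₀ = ⟨G₀, t⟩` contains `G₀` as a normal subgroup of index `2`, and
the cyclic `ℤG`-submodule `W` generated by `w` is isomorphic to `ℤG ⊗_{ℤK₀} V₀`, where
`V₀ ≅ ℤ` as an abelian group, `G₀` acts trivially on `V₀` and `K₀/G₀` acts by `−1`.  The last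
isomorphism is expressed by the universal property of the induced module `ℤG ⊗_{ℤK₀} V₀`:
for every `G`-representation `P` and every vector `p ∈ P` on which `G₀` acts trivially and
`t` acts by `−1` (i.e. every `K₀`-map `V₀ → P`), there is a unique `ℤ`-linear `G`-equivariant
map `W → P` sending `w` to `p`. -/
theorem cyclic_semiInduced_structure
    (ρ : Representation ℤ G S) (ι : Type) (B : Module.Basis ι ℤ S)
    (hsemi : ∀ (g : G) (i : ι), ∃ j : ι, ρ g (B i) = B j ∨ ρ g (B i) = -(B j))
    (i₀ : ι) (w : S) (hw : w = B i₀) (t : G) (ht : ρ t w = -w) :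
    t ^ 2 ∈ repStabilizer ρ w ∧
    ((repStabilizer ρ w).subgroupOf
        (Subgroup.closure ((repStabilizer ρ w : Set G) ∪ {t}))).Normal ∧
    ((repStabilizer ρ w).subgroupOf
        (Subgroup.closure ((repStabilizer ρ w : Set G) ∪ {t}))).index = 2 ∧
    (∀ (P : Type) [AddCommGroup P] [Module ℤ P] (σ : Representation ℤ G P) (p : P),
      (∀ g ∈ repStabilizer ρ w, σ g p = p) → σ t p = -p →
      ∃! f : ↥(Submodule.span ℤ (Set.range fun g => ρ g w)) →ₗ[ℤ] P,
        f ⟨w, by exact Submodule.subset_span ⟨1, by simp⟩⟩ = p ∧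
        ∀ (g : G) (x : ↥(Submodule.span ℤ (Set.range fun g => ρ g w)))
          (hgx : ρ g (x : S) ∈ Submodule.span ℤ (Set.range fun g => ρ g w)),
          f ⟨ρ g (x : S), hgx⟩ = σ g (f x)) := by
  classical
  rename_i instS
  have hinst : instS = AddCommGroup.toIntModule S := AddCommGroup.uniqueIntModule.uniq instS
  subst hinst
  -- basic facts
  have hwne : w ≠ -w := by
    intro h
    have := congrArg (fun s => B.repr s i₀) h
    simp [hw] at this
  have hwne' : ¬(-w = w) := fun h => hwne h.symm
  have hmul : ∀ (a b : G) (v : S), ρ (a * b) v = ρ a (ρ b v) := by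
    intro a b v; rw [map_mul]; rfl
  have ht2 : ρ (t ^ 2) w = w := by
    rw [pow_two, hmul, ht, map_neg, ht, neg_neg]
  set G₀ := repStabilizer ρ w with hG₀
  set K₀ := Subgroup.closure ((G₀ : Set G) ∪ {t}) with hK₀
  have htK : t ∈ K₀ := Subgroup.subset_closure (Or.inr rfl)
  have hKsign : ∀ k ∈ K₀, ρ k w = w ∨ ρ k w = -w := by
    intro k hk
    induction hk using Subgroup.closure_induction with
    | mem x hx =>
      rcases hx with hx | hx
      · exact Or.inl hx
      · simp only [Set.mem_singleton_iff] at hx; subst hx; exact Or.inr ht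
    | one => left; simp
    | mul x y hx hy ihx ihy =>
      rcases ihx with ihx | ihx <;> rcases ihy with ihy | ihy <;>
        rw [hmul, ihy] <;> simp [ihx, map_neg]
    | inv x hx ihx =>
      have h1 : ρ x⁻¹ (ρ x w) = w := by rw [← hmul]; simp
      rcases ihx with ihx | ihx
      · left; rw [ihx] at h1; exact h1
      · right
        rw [ihx, map_neg] at h1
        exact neg_eq_iff_eq_neg.mp h1
  -- the sign character on K₀
  let χ : K₀ →* ℤˣ :=
    { toFun := fun k => if ρ (k : G) w = w then 1 else -1
      map_one' := by simp
      map_mul' := by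
        intro a b
        rcases hKsign a a.2 with ha | ha <;> rcases hKsign b b.2 with hb | hb
        · have hab : ρ ((a * b : K₀) : G) w = w := by
            rw [Subgroup.coe_mul, hmul, hb, ha]
          rw [if_pos hab, if_pos ha, if_pos hb]; decide
        · have hab : ρ ((a * b : K₀) : G) w = -w := by
            rw [Subgroup.coe_mul, hmul, hb, map_neg, ha]
          rw [if_neg (by rw [hab]; exact hwne'), if_pos ha,
            if_neg (by rw [hb]; exact hwne')]
          decide
        · have hab : ρ ((a * b : K₀) : G) w = -w := by
            rw [Subgroup.coe_mul, hmul, hb, ha]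
          rw [if_neg (by rw [hab]; exact hwne'), if_neg (by rw [ha]; exact hwne'),
            if_pos hb]
          decide
        · have hab : ρ ((a * b : K₀) : G) w = w := by
            rw [Subgroup.coe_mul, hmul, hb, map_neg, ha, neg_neg]
          rw [if_pos hab, if_neg (by rw [ha]; exact hwne'),
            if_neg (by rw [hb]; exact hwne')]
          decide }
  have hker : G₀.subgroupOf K₀ = χ.ker := by
    ext k
    simp only [Subgroup.mem_subgroupOf, MonoidHom.mem_ker, χ, MonoidHom.coe_mk,
      OneHom.coe_mk]
    constructor
    · intro h
      have h' : ρ (k : G) w = w := h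
      rw [if_pos h']
    · intro h
      by_contra hc
      have hc' : ¬ ρ (k : G) w = w := hc
      rw [if_neg hc'] at h
      exact absurd h (by decide)
  have hsurj : Function.Surjective χ := by
    intro u
    rcases Int.units_eq_one_or u with rfl | rfl
    · exact ⟨1, by simp⟩
    · refine ⟨⟨t, htK⟩, ?_⟩
      simp only [χ, MonoidHom.coe_mk, OneHom.coe_mk]
      rw [if_neg (by rw [ht]; exact hwne')]
  refine ⟨ht2, ?_, ?_, ?_⟩
  · rw [hker]; exact MonoidHom.normal_ker χ
  · rw [hker, Subgroup.index_ker, MonoidHom.range_eq_top.mpr hsurj]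
    have : Nat.card (⊤ : Subgroup ℤˣ) = Nat.card ℤˣ :=
      Nat.card_congr Subgroup.topEquiv.toEquiv
    rw [this]
    simp [Nat.card_eq_fintype_card]
  · intro P _ instP σ p hp hpt
    have hinstP : instP = AddCommGroup.toIntModule P := Subsingleton.elim _ _
    subst hinstP
    -- compatibility lemmas
    have key1 : ∀ a b : G, ρ a w = ρ b w → σ a p = σ b p := by
      intro a b h
      have hmem : b⁻¹ * a ∈ G₀ := by
        show ρ (b⁻¹ * a) w = w
        rw [hmul, h, ← hmul]; simp
      have h2 := hp _ hmem
      calc σ a p = σ (b * (b⁻¹ * a)) p := by group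
      _ = σ b (σ (b⁻¹ * a) p) := by rw [map_mul]; rfl
      _ = σ b p := by rw [h2]
    have key2 : ∀ a b : G, ρ a w = -ρ b w → σ a p = -σ b p := by
      intro a b h
      have h' : ρ a w = ρ (b * t) w := by rw [hmul, ht, map_neg, h]
      rw [key1 _ _ h', map_mul, Module.End.mul_apply, hpt, map_neg]
    -- construct the linear map via the basis
    set c : ι → P := fun j =>
      if h : ∃ g : G, ρ g w = B j then σ h.choose p
      else if h' : ∃ g : G, ρ g w = -B j then -σ h'.choose p
      else 0 with hc
    set F : S →ₗ[ℤ] P := B.constr ℤ c with hF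
    have hFval : ∀ g : G, F (ρ g w) = σ g p := by
      intro g
      obtain ⟨j, hj | hj⟩ := hsemi g i₀
      · have hgw : ρ g w = B j := by rw [hw]; exact hj
        rw [hgw, hF, Module.Basis.constr_basis]
        have h : ∃ g : G, ρ g w = B j := ⟨g, hgw⟩
        rw [hc]
        simp only [dif_pos h]
        exact key1 _ _ (h.choose_spec.trans hgw.symm)
      · have hgw : ρ g w = -B j := by rw [hw]; exact hj
        rw [hgw, map_neg, hF, Module.Basis.constr_basis, hc]
        by_cases h : ∃ g : G, ρ g w = B j
        · simp only [dif_pos h]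
          have h3 : σ h.choose p = -σ g p := by
            apply key2
            rw [h.choose_spec, hgw, neg_neg]
          rw [h3, neg_neg]
        · have h' : ∃ g : G, ρ g w = -B j := ⟨g, hgw⟩
          simp only [dif_neg h, dif_pos h']
          rw [neg_neg]
          exact key1 _ _ (h'.choose_spec.trans hgw.symm)
    set W := Submodule.span ℤ (Set.range fun g => ρ g w) with hWdef
    have hFequiv : ∀ (g : G) (x : S), x ∈ W → F (ρ g x) = σ g (F x) := by
      intro g x hx
      induction hx using Submodule.span_induction with
      | mem x hx =>
        obtain ⟨g', rfl⟩ := hx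
        rw [← hmul, hFval, hFval, ← Module.End.mul_apply, ← map_mul]
      | zero => simp
      | add x y hx hy ihx ihy => simp [map_add, ihx, ihy]
      | smul a x hx ihx => simp [map_smul, ihx]
    refine ⟨{ toFun := fun x => F (x : S),
              map_add' := fun x y => F.map_add x y,
              map_smul' := fun a x => F.map_smul a x }, ⟨?_, ?_⟩, ?_⟩
    · show F w = p
      have h1 : w = ρ 1 w := by simp
      rw [h1, hFval, map_one]; rfl
    · intro g x hgx
      exact hFequiv g x x.2
    · rintro f' ⟨hf1, hf2⟩
      have hwmem : w ∈ W := Submodule.subset_span ⟨1, by simp⟩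
      have main : ∀ x (_ : x ∈ AddSubgroup.closure (Set.range fun g => ρ g w)),
          ∀ h : x ∈ W, f' ⟨x, h⟩ = F x := by
        intro x hx
        induction hx using AddSubgroup.closure_induction with
        | mem x hx =>
          intro h
          obtain ⟨g, rfl⟩ := hx
          have h4 := hf2 g ⟨w, hwmem⟩ h
          rw [h4, hf1, hFval]
        | zero =>
          intro h
          rw [show (⟨0, h⟩ : W) = 0 from rfl, map_zero, map_zero]
        | add x y hx hy ihx ihy =>
          intro h
          have hxW : x ∈ W := by
            rwa [← Submodule.mem_toAddSubgroup, Submodule.span_int_eq_addSubgroupClosure]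
          have hyW : y ∈ W := by
            rwa [← Submodule.mem_toAddSubgroup, Submodule.span_int_eq_addSubgroupClosure]
          rw [show (⟨x + y, h⟩ : W) = ⟨x, hxW⟩ + ⟨y, hyW⟩ from rfl, map_add,
            ihx hxW, ihy hyW, map_add]
        | neg x hx ihx =>
          intro h
          have hxW : x ∈ W := by
            rwa [← Submodule.mem_toAddSubgroup, Submodule.span_int_eq_addSubgroupClosure]
          rw [show (⟨-x, h⟩ : W) = -(⟨x, hxW⟩ : W) from rfl, map_neg, ihx hxW, map_neg]
      apply LinearMap.ext
      rintro ⟨x, hx⟩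
      have hx' : x ∈ AddSubgroup.closure (Set.range fun g => ρ g w) := by
        rw [← Submodule.span_int_eq_addSubgroupClosure, Submodule.mem_toAddSubgroup]
        exact hx
      exact main x hx' hx
end
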